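/- For natural numbers n, m1, m2 with m1 + m2 < n, Σ_{k=max(m1,m2)}^{m1+m2} G(n,m1,m2,k) = n!², where G(n,m1,m2,k) = m1!·m2!·(n−m1)!·(n−m2)!·n!/((k−m2)!·(k−m1)!·(m1+m2−k)!·(n−k)!). -/
import Mathlib


open Nat

/-- Vandermonde-type sum in ℕ. -/
lemma key_sum (n m1 m2 : ℕ) (h : m1 + m2 ≤ n) :
    ∑ k ∈ Finset.Icc (max m1 m2) (m1 + m2),
      m2.choose (k - m1) * (n - m2).choose (n - k) = n.choose (n - m1) := by
  have h1 : m1 ≤ n := by omega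
  have h2 : m2 ≤ n := by omega
  have hsub : Finset.Icc (max m1 m2) (m1 + m2) ⊆ Finset.Icc m1 n := by
    intro k hk
    simp only [Finset.mem_Icc] at *
    omega
  rw [Finset.sum_subset hsub]
  · rw [← Finset.Ico_add_one_right_eq_Icc, Finset.sum_Ico_eq_sum_range]
    have hN : n + 1 - m1 = (n - m1) + 1 := by omega
    rw [hN]
    have : ∀ i ∈ Finset.range ((n - m1) + 1),
        m2.choose (m1 + i - m1) * (n - m2).choose (n - (m1 + i))
          = m2.choose i * (n - m2).choose ((n - m1) - i) := by
      intro i hi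
      congr 2 <;> omega
    rw [Finset.sum_congr rfl this]
    have hv := Nat.add_choose_eq m2 (n - m2) (n - m1)
    rw [Finset.Nat.sum_antidiagonal_eq_sum_range_succ_mk] at hv
    have : m2 + (n - m2) = n := by omega
    rw [this] at hv
    exact hv.symm
  · intro k hk hk'
    simp only [Finset.mem_Icc] at hk hk'
    rcases Nat.lt_or_ge k m2 with hlt | hge
    · have : n - m2 < n - k := by omega
      rw [Nat.choose_eq_zero_of_lt this, mul_zero]
    · have : m2 < k - m1 := by omega
      rw [Nat.choose_eq_zero_of_lt this, zero_mul]

/-- For `m1 + m2 < n`, summing the closed form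
`G(n,m1,m2,k) = m1!·m2!·(n−m1)!·(n−m2)!·n!/((k−m2)!·(k−m1)!·(m1+m2−k)!·(n−k)!)` over
`k = max(m1,m2), …, m1+m2` yields `n!²`. -/
theorem stmt_14 (n m1 m2 : ℕ) (h : m1 + m2 < n) :
    ∑ k ∈ Finset.Icc (max m1 m2) (m1 + m2),
        (m1 ! * m2 ! * (n - m1)! * (n - m2)! * n ! : ℚ)
          / ((k - m2)! * (k - m1)! * (m1 + m2 - k)! * (n - k)!)
      = ((n ! : ℚ)) ^ 2 := by
  have step : ∀ k ∈ Finset.Icc (max m1 m2) (m1 + m2),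
      (m1 ! * m2 ! * (n - m1)! * (n - m2)! * n ! : ℚ)
          / ((k - m2)! * (k - m1)! * (m1 + m2 - k)! * (n - k)!)
        = ((n ! * m1 ! * (n - m1)! : ℕ) : ℚ)
            * ((m2.choose (k - m1) * (n - m2).choose (n - k) : ℕ) : ℚ) := by
    intro k hk
    simp only [Finset.mem_Icc] at hk
    have hm1 : m1 ≤ k := le_trans (le_max_left _ _) hk.1
    have hm2 : m2 ≤ k := le_trans (le_max_right _ _) hk.1
    have hkn : k ≤ n := by omega
    have e1 : m2.choose (k - m1) * (k - m1)! * (m1 + m2 - k)! = m2 ! := by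
      have h' : k - m1 ≤ m2 := by omega
      have := Nat.choose_mul_factorial_mul_factorial h'
      have h'' : m2 - (k - m1) = m1 + m2 - k := by omega
      rw [h''] at this
      exact this
    have e2 : (n - m2).choose (n - k) * (n - k)! * (k - m2)! = (n - m2)! := by
      have h' : n - k ≤ n - m2 := by omega
      have := Nat.choose_mul_factorial_mul_factorial h'
      have h'' : (n - m2) - (n - k) = k - m2 := by omega
      rw [h''] at this
      exact this
    have NE : (n ! * m1 ! * (n - m1)!) * (m2.choose (k - m1) * (n - m2).choose (n - k))
        * ((k - m2)! * (k - m1)! * (m1 + m2 - k)! * (n - k)!)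
        = m1 ! * m2 ! * (n - m1)! * (n - m2)! * n ! := by
      calc (n ! * m1 ! * (n - m1)!) * (m2.choose (k - m1) * (n - m2).choose (n - k))
            * ((k - m2)! * (k - m1)! * (m1 + m2 - k)! * (n - k)!)
          = (n ! * m1 ! * (n - m1)!)
            * (m2.choose (k - m1) * (k - m1)! * (m1 + m2 - k)!)
            * ((n - m2).choose (n - k) * (n - k)! * (k - m2)!) := by ring
        _ = m1 ! * m2 ! * (n - m1)! * (n - m2)! * n ! := by rw [e1, e2]; ring
    have hden : ((k - m2)! * (k - m1)! * (m1 + m2 - k)! * (n - k)! : ℚ) ≠ 0 := by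
      positivity
    rw [div_eq_iff hden]
    have := congrArg (fun x : ℕ => (x : ℚ)) NE
    push_cast at this ⊢
    linear_combination -this
  rw [Finset.sum_congr rfl step, ← Finset.mul_sum, ← Nat.cast_sum,
    key_sum n m1 m2 (le_of_lt h)]
  have hc : n.choose (n - m1) * (n - m1)! * m1 ! = n ! := by
    have h' : n - m1 ≤ n := Nat.sub_le _ _
    have := Nat.choose_mul_factorial_mul_factorial h'
    have h'' : n - (n - m1) = m1 := by omega
    rw [h''] at this
    exact this
  have := congrArg (fun x : ℕ => (x : ℚ)) hc
  push_cast at this ⊢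
  linear_combination ((n !) : ℚ) * this
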